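/- If H ≤ PSL(2,ℝ) is an abelian subgroup and G ≤ GL(2,ℝ)⁺ is the preimage of H under the natural projection GL(2,ℝ)⁺ → PSL(2,ℝ) (given by quotienting by positive scalar matrices and ±I), then G is abelian. -/

import Mathlib

open scoped MatrixGroups

/-- Lorentz-type contradiction: two "timelike orthogonal" traceless matrices cannot both have
positive determinant. -/
private lemma lorentz_contradiction (p q r x y w : ℝ) (h1 : p^2+q*r<0) (h2 : x^2+y*w<0)
    (h3 : 2*p*x+q*w+r*y=0) : False := by
  set s := (q+r)/2 with hs
  set t := (q-r)/2 with ht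
  set m := (y+w)/2 with hm
  set n := (y-w)/2 with hn
  have h1' : t^2 - (p^2 + s^2) > 0 := by rw [ht, hs]; nlinarith [h1]
  have h2' : n^2 - (x^2 + m^2) > 0 := by rw [hn, hm]; nlinarith [h2]
  have horth : t*n = p*x + s*m := by rw [hs, ht, hm, hn]; linarith [h3]
  have ht2 : t^2 > 0 := by nlinarith [sq_nonneg p, sq_nonneg s]
  have hbig : t^2*n^2 - (p^2+s^2)*(x^2+m^2) > 0 := by
    nlinarith [mul_pos ht2 h2', mul_nonneg (by positivity : (0:ℝ) ≤ x^2+m^2) h1'.le]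
  have hcs : (p*x+s*m)^2 ≤ (p^2+s^2)*(x^2+m^2) := by nlinarith [sq_nonneg (p*m - s*x)]
  have hsq : t^2*n^2 = (p*x+s*m)^2 := by rw [← horth]; ring
  linarith

/-- There are no 2×2 real matrices of positive determinant which are traceless and whose product
is traceless. -/
private lemma no_traceless_pair (A B : Matrix (Fin 2) (Fin 2) ℝ)
    (hA : 0 < A.det) (hB : 0 < B.det) (htA : A.trace = 0) (htB : B.trace = 0)
    (htAB : (A * B).trace = 0) : False := by
  rw [Matrix.det_fin_two] at hA hB
  rw [Matrix.trace_fin_two] at htA htB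
  have htAB' : A 0 0 * B 0 0 + A 0 1 * B 1 0 + (A 1 0 * B 0 1 + A 1 1 * B 1 1) = 0 := by
    rw [Matrix.trace_fin_two] at htAB
    simpa [Matrix.mul_apply, Fin.sum_univ_two] using htAB
  have h11 : A 1 1 = -A 0 0 := by linarith
  have h11' : B 1 1 = -B 0 0 := by linarith
  rw [h11] at hA htAB'
  rw [h11'] at hB htAB'
  exact lorentz_contradiction (A 0 0) (A 0 1) (A 1 0) (B 0 0) (B 0 1) (B 1 0)
    (by nlinarith) (by nlinarith) (by linarith)

/-- Two elements of `GL(2,ℝ)⁺` cannot anticommute. -/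
private lemma no_anticomm (x y : GL (Fin 2) ℝ)
    (hx : 0 < ((x : Matrix (Fin 2) (Fin 2) ℝ)).det)
    (hy : 0 < ((y : Matrix (Fin 2) (Fin 2) ℝ)).det)
    (h : (x : Matrix (Fin 2) (Fin 2) ℝ) * y = -((y : Matrix (Fin 2) (Fin 2) ℝ) * x)) :
    False := by
  set A : Matrix (Fin 2) (Fin 2) ℝ := (x : Matrix (Fin 2) (Fin 2) ℝ) with hAdef
  set B : Matrix (Fin 2) (Fin 2) ℝ := (y : Matrix (Fin 2) (Fin 2) ℝ) with hBdef
  have hyu : IsUnit B := ⟨y, rfl⟩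
  have hxu : IsUnit A := ⟨x, rfl⟩
  have hA0 : A = -(B * A * B⁻¹) := by
    have h1 : A * B * B⁻¹ = -(B * A) * B⁻¹ := by rw [h]
    rwa [Matrix.mul_assoc, Matrix.mul_nonsing_inv B (by exact hyu.map Matrix.detMonoidHom), mul_one,
      neg_mul] at h1
  have htA : A.trace = 0 := by
    have := congrArg Matrix.trace hA0
    rw [Matrix.trace_neg, Matrix.trace_conj hyu] at this
    linarith
  have hB0 : B = -(A⁻¹ * B * A) := by
    have h1 : A⁻¹ * (A * B) = A⁻¹ * -(B * A) := by rw [h]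
    rwa [← Matrix.mul_assoc, Matrix.nonsing_inv_mul A (by exact hxu.map Matrix.detMonoidHom), one_mul,
      mul_neg, ← Matrix.mul_assoc] at h1
  have htB : B.trace = 0 := by
    have := congrArg Matrix.trace hB0
    rw [Matrix.trace_neg, Matrix.trace_conj' hxu] at this
    linarith
  have htAB : (A * B).trace = 0 := by
    have := congrArg Matrix.trace h
    rw [Matrix.trace_neg, Matrix.trace_mul_comm B A] at this
    linarith
  exact no_traceless_pair A B hx hy htA htB htAB

/-- `PSL(2,ℝ) = SL(2,ℝ)/{±I}`. -/
abbrev PSL2R : Type :=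
  Matrix.SpecialLinearGroup (Fin 2) ℝ ⧸ Subgroup.center (Matrix.SpecialLinearGroup (Fin 2) ℝ)

/-- If `H ≤ PSL(2,ℝ)` is an abelian subgroup and `G ≤ GL(2,ℝ)⁺` is its preimage under the
natural projection `GL(2,ℝ)⁺ → PSL(2,ℝ)` (a surjection whose kernel consists of the nonzero
scalar matrices `λI`), then `G` is abelian. -/
theorem preimage_of_abelian_is_abelian (π : GL(2, ℝ)⁺ →* PSL2R)
    (hsurj : Function.Surjective π)
    (hker : ∀ g : GL(2, ℝ)⁺, π g = 1 ↔
      ∃ lam : ℝ, lam ≠ 0 ∧ ((g : GL (Fin 2) ℝ) : Matrix (Fin 2) (Fin 2) ℝ) = lam • 1)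
    (H : Subgroup PSL2R) (hH : ∀ a b : H, a * b = b * a) :
    ∀ a b : H.comap π, a * b = b * a := by
  intro a b
  set x := (↑a : GL(2, ℝ)⁺) with hxdef
  set y := (↑b : GL(2, ℝ)⁺) with hydef
  have hcomm : π x * π y = π y * π x :=
    congrArg Subtype.val (hH ⟨π x, a.2⟩ ⟨π y, b.2⟩)
  have hπ : π (x * y * (y * x)⁻¹) = 1 := by
    rw [π.map_mul, π.map_mul, π.map_inv, π.map_mul, hcomm, mul_inv_cancel]
  obtain ⟨lam, hlam0, hmat⟩ := (hker _).mp hπ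
  -- express the kernel condition as a matrix identity
  set A : Matrix (Fin 2) (Fin 2) ℝ := ((x : GL (Fin 2) ℝ) : Matrix (Fin 2) (Fin 2) ℝ) with hA
  set B : Matrix (Fin 2) (Fin 2) ℝ := ((y : GL (Fin 2) ℝ) : Matrix (Fin 2) (Fin 2) ℝ) with hB
  have hgl : ((x * y * (y * x)⁻¹ : GL(2, ℝ)⁺) : GL (Fin 2) ℝ)
      = (x : GL (Fin 2) ℝ) * y * ((y : GL (Fin 2) ℝ) * x)⁻¹ := by
    push_cast
    rfl
  have key : A * B = lam • (B * A) := by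
    have h1 : ((x * y * (y * x)⁻¹ : GL(2, ℝ)⁺) : GL (Fin 2) ℝ) * ((y : GL (Fin 2) ℝ) * x)
        = (x : GL (Fin 2) ℝ) * y := by
      rw [hgl, mul_assoc, inv_mul_cancel, mul_one]
    have h2 := congrArg (Units.val : GL (Fin 2) ℝ → Matrix (Fin 2) (Fin 2) ℝ) h1
    rw [Units.val_mul, hmat, Units.val_mul, Units.val_mul] at h2
    rw [← h2, smul_mul_assoc, one_mul]
  have hdetA : 0 < A.det := (Matrix.mem_glpos _).mp x.2
  have hdetB : 0 < B.det := (Matrix.mem_glpos _).mp y.2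
  have hdet : A.det * B.det = lam ^ 2 * (B.det * A.det) := by
    rw [← Matrix.det_mul, key, Matrix.det_smul, Matrix.det_mul]
    norm_num
  have hlam2 : lam ^ 2 = 1 := by
    have hpos : 0 < B.det * A.det := mul_pos hdetB hdetA
    field_simp at hdet
    nlinarith
  have hcases : lam = 1 ∨ lam = -1 := by
    rcases mul_eq_zero.mp (show (lam - 1) * (lam + 1) = 0 by nlinarith [hlam2]) with h | h
    · exact Or.inl (by linarith)
    · exact Or.inr (by linarith)
  rcases hcases with h1 | h1
  · -- lam = 1 : the matrices commute, so the group elements commute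
    rw [h1, one_smul] at key
    apply Subtype.ext
    apply Subtype.ext
    apply Units.ext
    show ((((a * b : H.comap π) : GL(2, ℝ)⁺) : GL (Fin 2) ℝ) : Matrix (Fin 2) (Fin 2) ℝ)
      = ((((b * a : H.comap π) : GL(2, ℝ)⁺) : GL (Fin 2) ℝ) : Matrix (Fin 2) (Fin 2) ℝ)
    push_cast
    exact key
  · -- lam = -1 : impossible by the anticommutation lemma
    rw [h1] at key
    exact absurd key (by
      intro hk
      exact no_anticomm (x : GL (Fin 2) ℝ) (y : GL (Fin 2) ℝ) hdetA hdetB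
        (by rw [hk]; simp; rfl))
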